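/- Exact energy conservation for the unforced two-step leap-frog scheme. Let H and S be real Hilbert spaces, A : H → H and W : S → S bounded self-adjoint invertible linear operators, and E : H → S a bounded linear operator with adjoint E* : S → H. Let τ > 0 and let sequences (v^k)_{k≥0} in H and (Σ^{k+1/2})_{k≥0} in S satisfy, for all k ≥ 1, Σ^{k+1/2} = Σ^{k−1/2} + τ·W E v^k and, for all k ≥ 0, A v^{k+1} = A v^k − τ·E* Σ^{k+1/2}. Then the discrete energy 𝔈^{k} := (1/2)⟨A v^{k}, v^{k−1}⟩ + (1/2)⟨W⁻¹ Σ^{k−1/2}, Σ^{k−1/2}⟩ is conserved: 𝔈^{k} = 𝔈^{1} for every k ≥ 1. -/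

import Mathlib

open scoped RealInnerProductSpace

/-- **Exact energy conservation for the unforced two-step leap-frog scheme.**
With `Shalf k` denoting `Σ^{k+1/2}`, the scheme
`Σ^{k+1/2} = Σ^{k−1/2} + τ W E v^k` (k ≥ 1) and `A v^{k+1} = A v^k − τ E* Σ^{k+1/2}` (k ≥ 0)
conserves the twisted discrete energy
`𝔈^k = (1/2)⟨A v^k, v^{k−1}⟩ + (1/2)⟨W⁻¹ Σ^{k−1/2}, Σ^{k−1/2}⟩`. -/
theorem leapfrog_energy_conservation
    {H S : Type*}
    [NormedAddCommGroup H] [InnerProductSpace ℝ H] [CompleteSpace H]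
    [NormedAddCommGroup S] [InnerProductSpace ℝ S] [CompleteSpace S]
    (A Ainv : H →L[ℝ] H) (W Winv : S →L[ℝ] S)
    (hA_symm : ∀ x y : H, ⟪A x, y⟫ = ⟪x, A y⟫)
    (hW_symm : ∀ x y : S, ⟪W x, y⟫ = ⟪x, W y⟫)
    (hAinv₁ : ∀ x, A (Ainv x) = x) (hAinv₂ : ∀ x, Ainv (A x) = x)
    (hWinv₁ : ∀ x, W (Winv x) = x) (hWinv₂ : ∀ x, Winv (W x) = x)
    (E : H →L[ℝ] S) (Estar : S →L[ℝ] H)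
    (hadj : ∀ (σ : S) (w : H), ⟪Estar σ, w⟫ = ⟪σ, E w⟫)
    (τ : ℝ) (hτ : 0 < τ)
    (v : ℕ → H) (Shalf : ℕ → S)
    (hstress : ∀ k : ℕ, 1 ≤ k → Shalf k = Shalf (k - 1) + τ • W (E (v k)))
    (hvel : ∀ k : ℕ, A (v (k + 1)) = A (v k) - τ • Estar (Shalf k)) :
    ∀ k : ℕ, 1 ≤ k →
      (1/2) * ⟪A (v k), v (k - 1)⟫ + (1/2) * ⟪Winv (Shalf (k - 1)), Shalf (k - 1)⟫
        = (1/2) * ⟪A (v 1), v 0⟫ + (1/2) * ⟪Winv (Shalf 0), Shalf 0⟫ := by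
  have key : ∀ m : ℕ,
      (1/2) * ⟪A (v (m+2)), v (m+1)⟫ + (1/2) * ⟪Winv (Shalf (m+1)), Shalf (m+1)⟫
        = (1/2) * ⟪A (v (m+1)), v m⟫ + (1/2) * ⟪Winv (Shalf m), Shalf m⟫ := by
    intro m
    set u := v (m+1) with hu
    set σ := Shalf m with hσ
    set e := E u with he
    have h3 : Shalf (m+1) = σ + τ • W e := by
      have := hstress (m+1) (by omega); simpa using this
    have h1 : A (v (m+2)) = A u - τ • Estar σ - (τ*τ) • Estar (W e) := by
      rw [hvel (m+1), h3]
      simp [map_add, map_smul, smul_smul, smul_add, sub_sub, ← hu]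
    have h2 : ⟪A u, v m⟫ = ⟪A u, u⟫ + τ * ⟪σ, e⟫ := by
      have hm : A (v m) = A u + τ • Estar σ := by
        rw [hvel m]; abel
      calc ⟪A u, v m⟫ = ⟪A (v m), u⟫ := by rw [hA_symm, real_inner_comm]
        _ = ⟪A u, u⟫ + τ * ⟪σ, e⟫ := by
            rw [hm]; simp [inner_add_left, real_inner_smul_left, hadj, ← he]
    have hWsE : ⟪Winv σ, W e⟫ = ⟪σ, e⟫ := by
      rw [← hW_symm, hWinv₁]
    have hWs : Winv (Shalf (m+1)) = Winv σ + τ • e := by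
      rw [h3]; simp [map_add, map_smul, hWinv₂]
    have c1 : ⟪e, σ⟫ = ⟪σ, e⟫ := real_inner_comm _ _
    have c2 : ⟪W e, e⟫ = ⟪e, W e⟫ := real_inner_comm _ _
    rw [h1, hWs, h3]
    simp only [inner_sub_left, inner_add_left, inner_add_right, real_inner_smul_left,
      real_inner_smul_right, hadj, ← he, hWsE, h2, c1, c2]
    ring
  intro k hk
  induction k with
  | zero => omega
  | succ n ih =>
    cases n with
    | zero => simp
    | succ m =>
      have h := key m
      have h' := ih (Nat.le_add_left 1 m)
      simp only [Nat.add_sub_cancel] at h' ⊢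
      exact h.trans h'
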